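/- Let G be a finite connected simple graph, let R ≥ 1 be a real number, and let S be a maximal independent set of the power graph G^{≤R}. Consider the Voronoi clustering vor(S), and for s ∈ S let 𝒞(s) denote the Voronoi cell centered at s. Then for every s ∈ S: every vertex v with d_G(v,s) ≤ R/2 belongs to 𝒞(s), and every vertex of 𝒞(s) is at distance at most R from s; that is, B_{R/2}(s) ⊆ 𝒞(s) ⊆ B_R(s). -/

import Mathlib

open SimpleGraph

/-- The cluster graph (quotient graph) of a clustering given as a setoid:
two distinct clusters are adjacent iff some edge of `G` has one endpoint in each. -/
def clusterGraph {V : Type*} (G : SimpleGraph V) (c : Setoid V) :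
    SimpleGraph (Quotient c) where
  Adj x y := x ≠ y ∧ ∃ u v : V, G.Adj u v ∧ Quotient.mk c u = x ∧ Quotient.mk c v = y
  symm := by
    constructor
    rintro x y ⟨hxy, u, v, h1, h2, h3⟩
    exact ⟨hxy.symm, v, u, h1.symm, h3, h2⟩
  loopless := by
    constructor
    rintro x ⟨hx, -⟩
    exact hx rfl

/-- A clustering: each equivalence class induces a connected subgraph. -/
def IsClustering {V : Type*} (G : SimpleGraph V) (c : Setoid V) : Prop :=
  ∀ v : V, (G.induce {u | c.r u v}).Connected

/-- `C` bounds the distance distortion of the clustering `c` at scale `R`: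
(i) for all `v w`, `1/C ≤ (1 + d(v,w)/R)/(1 + d'([v],[w])) ≤ C`, and
(ii) the diameter of the subgraph induced by each cluster is at most `C * R`. -/
def DistortionLE {V : Type*} (G : SimpleGraph V) (c : Setoid V) (R C : ℝ) : Prop :=
  (∀ v w : V,
      1 / C ≤ (1 + (G.dist v w : ℝ) / R) /
          (1 + ((clusterGraph G c).dist (Quotient.mk c v) (Quotient.mk c w) : ℝ)) ∧
      (1 + (G.dist v w : ℝ) / R) /
          (1 + ((clusterGraph G c).dist (Quotient.mk c v) (Quotient.mk c w) : ℝ)) ≤ C) ∧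
  (∀ v u w : V, ∀ hu : c.r u v, ∀ hw : c.r w v,
      ((G.induce {x | c.r x v}).dist ⟨u, hu⟩ ⟨w, hw⟩ : ℝ) ≤ C * R)

/-- The power graph `G^{≤R}`: `u ≠ v` adjacent iff their graph distance is at most `R`. -/
def powerGraph {V : Type*} (G : SimpleGraph V) (R : ℝ) : SimpleGraph V where
  Adj u v := u ≠ v ∧ (G.dist u v : ℝ) ≤ R
  symm := by
    constructor
    rintro u v ⟨h1, h2⟩
    exact ⟨h1.symm, by rwa [SimpleGraph.dist_comm]⟩
  loopless := by
    constructor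
    rintro u ⟨h, -⟩
    exact h rfl

/-- `S` is an independent set of the graph `H`. -/
def IsIndepSetOf {V : Type*} (H : SimpleGraph V) (S : Set V) : Prop :=
  ∀ u ∈ S, ∀ v ∈ S, ¬ H.Adj u v

/-- `S` is a maximal independent set of the graph `H`. -/
def IsMaximalIndepSet {V : Type*} (H : SimpleGraph V) (S : Set V) : Prop :=
  IsIndepSetOf H S ∧ ∀ v : V, v ∉ S → ∃ u ∈ S, H.Adj v u

/-- `G^{≤R}` has bounded independence with parameters `γ, k`: every independent set of
`G^{≤R}` contained in a ball `B_{rR}(v)` has size at most `γ * r ^ k`. -/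
def HasBoundedIndependence {V : Type*} (G : SimpleGraph V) (R γ k : ℝ) : Prop :=
  ∀ v : V, ∀ r : ℝ, 0 < r → ∀ S : Set V,
    IsIndepSetOf (powerGraph G R) S →
    (∀ u ∈ S, (G.dist u v : ℝ) ≤ r * R) →
    (S.ncard : ℝ) ≤ γ * r ^ k

/-- `f` is the cluster-center map of the Voronoi clustering `vor(S)` with tie-breaking
by the injective identifier `ID`. -/
def IsVoronoiMap {V : Type*} (G : SimpleGraph V) (S : Set V) (ID : V → ℕ) (f : V → V) : Prop :=
  ∀ v : V, f v ∈ S ∧ ∀ s ∈ S,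
    G.dist (f v) v < G.dist s v ∨ (G.dist (f v) v = G.dist s v ∧ ID (f v) ≤ ID s)

/-- `f` is the cluster-center map of the additively weighted Voronoi clustering `vor(S, W)`
with tie-breaking by the injective identifier `ID`. -/
def IsWeightedVoronoiMap {V : Type*} (G : SimpleGraph V) (S : Set V) (W : V → ℝ)
    (ID : V → ℕ) (f : V → V) : Prop :=
  ∀ v : V, f v ∈ S ∧ ∀ s ∈ S,
    ((G.dist (f v) v : ℝ) - W (f v) < (G.dist s v : ℝ) - W s) ∨
    ((G.dist (f v) v : ℝ) - W (f v) = (G.dist s v : ℝ) - W s ∧ ID (f v) ≤ ID s)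

/-- Let `G` be a finite connected simple graph, `R ≥ 1`, and `S` a maximal
independent set of `G^{≤R}`. In the Voronoi clustering `vor(S)` (with cluster-center map `f`),
for every `s ∈ S` the Voronoi cell `𝒞(s) = {v | f v = s}` satisfies
`B_{R/2}(s) ⊆ 𝒞(s) ⊆ B_R(s)`. -/
theorem stmt6 (V : Type) [Fintype V] (G : SimpleGraph V) (hG : G.Connected)
    (R : ℝ) (hR : 1 ≤ R)
    (S : Set V) (hS : IsMaximalIndepSet (powerGraph G R) S)
    (ID : V → ℕ) (hID : Function.Injective ID)
    (f : V → V) (hf : IsVoronoiMap G S ID f) :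
    ∀ s ∈ S,
      (∀ v : V, (G.dist v s : ℝ) ≤ R / 2 → f v = s) ∧
      (∀ v : V, f v = s → (G.dist v s : ℝ) ≤ R) := by
  intro s hs
  have key : ∀ v : V, ∀ t ∈ S, (G.dist (f v) v : ℝ) ≤ G.dist t v := by
    intro v t ht
    rcases (hf v).2 t ht with h | ⟨h, -⟩
    · exact_mod_cast h.le
    · exact_mod_cast h.le
  constructor
  · intro v hv
    have hfvS := (hf v).1
    have h1 : (G.dist (f v) v : ℝ) ≤ R / 2 := by
      refine (key v s hs).trans ?_
      rwa [SimpleGraph.dist_comm]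
    have h2 : (G.dist (f v) s : ℝ) ≤ R := by
      have h3 := hG.dist_triangle (u := f v) (v := v) (w := s)
      have h4 : (G.dist (f v) s : ℝ) ≤ (G.dist (f v) v : ℝ) + (G.dist v s : ℝ) := by
        exact_mod_cast h3
      linarith
    by_contra hne
    exact hS.1 (f v) hfvS s hs ⟨hne, h2⟩
  · intro v hv
    by_cases hvS : v ∈ S
    · have h0 : G.dist (f v) v = 0 := by
        have h := key v v hvS
        simp only [SimpleGraph.dist_self, Nat.cast_zero] at h
        have : (G.dist (f v) v : ℕ) ≤ 0 := by exact_mod_cast h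
        omega
      have hfv : f v = v := (hG.dist_eq_zero_iff).1 h0
      have : v = s := by rw [← hv, hfv]
      subst this
      simp only [SimpleGraph.dist_self, Nat.cast_zero]
      linarith
    · obtain ⟨u, huS, hne, hd⟩ := hS.2 v hvS
      rw [SimpleGraph.dist_comm]
      calc (G.dist s v : ℝ) = G.dist (f v) v := by rw [hv]
        _ ≤ G.dist u v := key v u huS
        _ = G.dist v u := by rw [SimpleGraph.dist_comm]
        _ ≤ R := hd
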